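/- For every f ∈ L²(ℝ²), ‖𝓕⁻¹( m₀ · 𝓕(f) )‖_{L²}² + Σ_{n=1}^{N−1} ‖𝓕⁻¹( mₙ · 𝓕(f) )‖_{L²}² = ‖f‖_{L²}², where m₀(ω) = Φ(|ω|) and mₙ(ω) = Wₙ(|ω|) for ω ∈ ℝ²; i.e., the 2D empirical Littlewood–Paley wavelet family is a tight frame of L²(ℝ²). -/

import Mathlib

set_option maxHeartbeats 1000000

open FourierTransform MeasureTheory

private lemma tele_sum (a b : ℕ → ℝ) (hab : ∀ n, a n + b n = 1) (k : ℕ)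
    (hd : ∀ n, 1 ≤ n → n ≤ k → b n = 1 ∨ a (n + 1) = 1) :
    a 1 + ∑ n ∈ Finset.Icc 1 k, b n * a (n + 1) = a (k + 1) := by
  induction k with
  | zero => simp
  | succ k ih =>
    rw [Finset.sum_Icc_succ_top (by omega), ← add_assoc,
      ih (fun n h1 h2 => hd n h1 (by omega))]
    rcases hd (k + 1) (by omega) le_rfl with h | h
    · have h1 := hab (k + 1)
      rw [h, one_mul]
      linarith
    · rw [h, mul_one]
      linarith [hab (k + 1)]

private lemma L2_norm_sq {α : Type*} [MeasurableSpace α] {μ : Measure α}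
    (h : Lp ℂ 2 μ) : ‖h‖ ^ 2 = ∫ x, ‖h x‖ ^ 2 ∂μ := by
  rw [← inner_self_eq_norm_sq (𝕜 := ℂ) h, L2.inner_def]
  have : ∫ x, (inner ℂ (h x) (h x) : ℂ) ∂μ = ((∫ x, ‖h x‖ ^ 2 ∂μ : ℝ) : ℂ) := by
    calc ∫ x, (inner ℂ (h x) (h x) : ℂ) ∂μ
        = ∫ x, ((‖h x‖ ^ 2 : ℝ) : ℂ) ∂μ := by
          refine integral_congr_ae (Filter.Eventually.of_forall fun x => ?_)
          simp only [inner_self_eq_norm_sq_to_K]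
          norm_cast
      _ = ((∫ x, ‖h x‖ ^ 2 ∂μ : ℝ) : ℂ) := integral_ofReal
  rw [this]
  simp

/-- The 2D empirical Littlewood–Paley wavelet family is a tight frame of `L²(ℝ²)`:
with radial multipliers `m₀(ω) = Φ(|ω|)` and `mₙ(ω) = Wₙ(|ω|)`,
`‖𝓕⁻¹(m₀·𝓕 f)‖² + Σ_{n=1}^{N−1} ‖𝓕⁻¹(mₙ·𝓕 f)‖² = ‖f‖²` for every `f ∈ L²(ℝ²)`. -/
theorem empirical_LP_tight_frame
    (β : ℝ → ℝ)
    (hβ0 : ∀ x : ℝ, x ≤ 0 → β x = 0)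
    (hβ1 : ∀ x ∈ Set.Icc (0 : ℝ) 1, β x = x ^ 4 * (35 - 84 * x + 70 * x ^ 2 - 20 * x ^ 3))
    (hβ2 : ∀ x : ℝ, 1 ≤ x → β x = 1)
    (N : ℕ) (hN : 2 ≤ N) (ω : ℕ → ℝ)
    (hω0 : 0 < ω 1)
    (hωmono : ∀ n, 1 ≤ n → n ≤ N - 2 → ω n < ω (n + 1))
    (γ : ℝ) (hγ : γ ∈ Set.Ioo (0 : ℝ) 1)
    (hsep : ∀ n, 1 ≤ n → n ≤ N - 2 → (1 + γ) * ω n ≤ (1 - γ) * ω (n + 1))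
    (Φ : ℝ → ℝ) (W : ℕ → ℝ → ℝ)
    (hΦ1 : ∀ r : ℝ, 0 ≤ r → r ≤ (1 - γ) * ω 1 → Φ r = 1)
    (hΦ2 : ∀ r : ℝ, (1 - γ) * ω 1 ≤ r → r ≤ (1 + γ) * ω 1 →
      Φ r = Real.cos (Real.pi / 2 * β ((r - (1 - γ) * ω 1) / (2 * γ * ω 1))))
    (hΦ3 : ∀ r : ℝ, (1 + γ) * ω 1 < r → Φ r = 0)
    (hW1 : ∀ n, 1 ≤ n → n ≤ N - 2 → ∀ r : ℝ, (1 - γ) * ω n ≤ r → r ≤ (1 + γ) * ω n →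
      W n r = Real.sin (Real.pi / 2 * β ((r - (1 - γ) * ω n) / (2 * γ * ω n))))
    (hW2 : ∀ n, 1 ≤ n → n ≤ N - 2 → ∀ r : ℝ, (1 + γ) * ω n ≤ r → r ≤ (1 - γ) * ω (n + 1) →
      W n r = 1)
    (hW3 : ∀ n, 1 ≤ n → n ≤ N - 2 → ∀ r : ℝ,
      (1 - γ) * ω (n + 1) ≤ r → r ≤ (1 + γ) * ω (n + 1) →
      W n r = Real.cos (Real.pi / 2 * β ((r - (1 - γ) * ω (n + 1)) / (2 * γ * ω (n + 1)))))
    (hW4 : ∀ n, 1 ≤ n → n ≤ N - 2 → ∀ r : ℝ, 0 ≤ r →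
      (r < (1 - γ) * ω n ∨ (1 + γ) * ω (n + 1) < r) → W n r = 0)
    (hWl1 : ∀ r : ℝ, (1 - γ) * ω (N - 1) ≤ r → r ≤ (1 + γ) * ω (N - 1) →
      W (N - 1) r = Real.sin (Real.pi / 2 * β ((r - (1 - γ) * ω (N - 1)) / (2 * γ * ω (N - 1)))))
    (hWl2 : ∀ r : ℝ, (1 + γ) * ω (N - 1) ≤ r → W (N - 1) r = 1)
    (hWl3 : ∀ r : ℝ, 0 ≤ r → r < (1 - γ) * ω (N - 1) → W (N - 1) r = 0)
    (F : Lp ℂ 2 (volume : Measure (EuclideanSpace ℝ (Fin 2))) ≃ₗᵢ[ℂ]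
      Lp ℂ 2 (volume : Measure (EuclideanSpace ℝ (Fin 2))))
    (hF : ∀ (f : EuclideanSpace ℝ (Fin 2) → ℂ) (hf1 : Integrable f)
      (hf2 : MemLp f 2 (volume : Measure (EuclideanSpace ℝ (Fin 2)))),
      (F (hf2.toLp f) : EuclideanSpace ℝ (Fin 2) → ℂ) =ᵐ[volume] 𝓕 f) :
    ∀ (f : Lp ℂ 2 (volume : Measure (EuclideanSpace ℝ (Fin 2))))
      (g : ℕ → Lp ℂ 2 (volume : Measure (EuclideanSpace ℝ (Fin 2)))),
      ((g 0 : EuclideanSpace ℝ (Fin 2) → ℂ) =ᵐ[volume]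
        fun x => (Φ ‖x‖ : ℂ) * (F f : EuclideanSpace ℝ (Fin 2) → ℂ) x) →
      (∀ n, 1 ≤ n → n ≤ N - 1 →
        (g n : EuclideanSpace ℝ (Fin 2) → ℂ) =ᵐ[volume]
          fun x => (W n ‖x‖ : ℂ) * (F f : EuclideanSpace ℝ (Fin 2) → ℂ) x) →
      ‖F.symm (g 0)‖ ^ 2 + ∑ n ∈ Finset.Icc 1 (N - 1), ‖F.symm (g n)‖ ^ 2
        = ‖f‖ ^ 2 := by
  obtain ⟨hγ0, hγ1⟩ := hγ
  obtain ⟨M, rfl⟩ : ∃ M, N = M + 2 := ⟨N - 2, by omega⟩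
  have e1 : M + 2 - 2 = M := by omega
  have e2 : M + 2 - 1 = M + 1 := by omega
  simp only [e1, e2] at hωmono hsep hW1 hW2 hW3 hW4 hWl1 hWl2 hWl3 ⊢
  -- positivity of the ω's
  have hωpos : ∀ n, 1 ≤ n → n ≤ M + 1 → 0 < ω n := by
    intro n
    induction n with
    | zero => omega
    | succ m ih =>
      intro _ h2
      rcases Nat.eq_zero_or_pos m with hm | hm
      · subst hm; exact hω0
      · exact (ih hm (by omega)).trans (hωmono m hm (by omega))
  -- values of the phase in the flat regions
  have hθ0 : ∀ n r, 1 ≤ n → n ≤ M + 1 → r ≤ (1 - γ) * ω n →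
      Real.pi / 2 * β ((r - (1 - γ) * ω n) / (2 * γ * ω n)) = 0 := by
    intro n r h1 h2 hr
    have hω := hωpos n h1 h2
    have hden : 0 < 2 * γ * ω n := by positivity
    have : (r - (1 - γ) * ω n) / (2 * γ * ω n) ≤ 0 :=
      div_nonpos_of_nonpos_of_nonneg (by linarith) hden.le
    rw [hβ0 _ this, mul_zero]
  have hθ1 : ∀ n r, 1 ≤ n → n ≤ M + 1 → (1 + γ) * ω n ≤ r →
      Real.pi / 2 * β ((r - (1 - γ) * ω n) / (2 * γ * ω n)) = Real.pi / 2 := by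
    intro n r h1 h2 hr
    have hω := hωpos n h1 h2
    have hden : 0 < 2 * γ * ω n := by positivity
    have : 1 ≤ (r - (1 - γ) * ω n) / (2 * γ * ω n) :=
      (one_le_div hden).2 (by nlinarith)
    rw [hβ2 _ this, mul_one]
  -- representation of Φ
  have hΦrep : ∀ r : ℝ, 0 ≤ r →
      Φ r = Real.cos (Real.pi / 2 * β ((r - (1 - γ) * ω 1) / (2 * γ * ω 1))) := by
    intro r hr
    rcases le_or_gt r ((1 - γ) * ω 1) with h | h
    · rw [hΦ1 r hr h, hθ0 1 r le_rfl (by omega) h, Real.cos_zero]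
    · rcases le_or_gt r ((1 + γ) * ω 1) with h' | h'
      · exact hΦ2 r h.le h'
      · rw [hΦ3 r h', hθ1 1 r le_rfl (by omega) h'.le, Real.cos_pi_div_two]
  -- representation of the middle windows
  have hWrep : ∀ n, 1 ≤ n → n ≤ M → ∀ r : ℝ, 0 ≤ r →
      W n r = Real.sin (Real.pi / 2 * β ((r - (1 - γ) * ω n) / (2 * γ * ω n))) *
        Real.cos (Real.pi / 2 * β ((r - (1 - γ) * ω (n + 1)) / (2 * γ * ω (n + 1)))) := by
    intro n h1 h2 r hr
    have hsep' := hsep n h1 h2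
    rcases lt_or_ge r ((1 - γ) * ω n) with h | h
    · rw [hW4 n h1 h2 r hr (Or.inl h), hθ0 n r h1 (by omega) h.le, Real.sin_zero, zero_mul]
    · rcases le_or_gt r ((1 + γ) * ω n) with h' | h'
      · rw [hW1 n h1 h2 r h h',
          hθ0 (n + 1) r (by omega) (by omega) (h'.trans hsep'), Real.cos_zero, mul_one]
      · rcases le_or_gt r ((1 - γ) * ω (n + 1)) with h'' | h''
        · rw [hW2 n h1 h2 r h'.le h'', hθ1 n r h1 (by omega) h'.le,
            hθ0 (n + 1) r (by omega) (by omega) h'', Real.sin_pi_div_two, Real.cos_zero,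
            one_mul]
        · rcases le_or_gt r ((1 + γ) * ω (n + 1)) with h3 | h3
          · rw [hW3 n h1 h2 r h''.le h3,
              hθ1 n r h1 (by omega) (hsep'.trans h''.le), Real.sin_pi_div_two, one_mul]
          · rw [hW4 n h1 h2 r hr (Or.inr h3),
              hθ1 (n + 1) r (by omega) (by omega) h3.le, Real.cos_pi_div_two, mul_zero]
  -- representation of the last window
  have hWlrep : ∀ r : ℝ, 0 ≤ r →
      W (M + 1) r = Real.sin (Real.pi / 2 *
        β ((r - (1 - γ) * ω (M + 1)) / (2 * γ * ω (M + 1)))) := by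
    intro r hr
    rcases lt_or_ge r ((1 - γ) * ω (M + 1)) with h | h
    · rw [hWl3 r hr h, hθ0 (M + 1) r (by omega) le_rfl h.le, Real.sin_zero]
    · rcases le_or_gt r ((1 + γ) * ω (M + 1)) with h' | h'
      · exact hWl1 r h h'
      · rw [hWl2 r h'.le, hθ1 (M + 1) r (by omega) le_rfl h'.le, Real.sin_pi_div_two]
  -- key pointwise identity
  have key : ∀ r : ℝ, 0 ≤ r →
      Φ r ^ 2 + ∑ n ∈ Finset.Icc 1 (M + 1), W n r ^ 2 = 1 := by
    intro r hr
    set a : ℕ → ℝ := fun n =>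
      Real.cos (Real.pi / 2 * β ((r - (1 - γ) * ω n) / (2 * γ * ω n))) ^ 2 with ha
    set b : ℕ → ℝ := fun n =>
      Real.sin (Real.pi / 2 * β ((r - (1 - γ) * ω n) / (2 * γ * ω n))) ^ 2 with hb
    have hab : ∀ n, a n + b n = 1 := fun n => Real.cos_sq_add_sin_sq _
    have hd : ∀ n, 1 ≤ n → n ≤ M → b n = 1 ∨ a (n + 1) = 1 := by
      intro n h1 h2
      rcases le_or_gt ((1 + γ) * ω n) r with h | h
      · left; rw [hb]; simp only
        rw [hθ1 n r h1 (by omega) h, Real.sin_pi_div_two, one_pow]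
      · right; rw [ha]; simp only
        rw [hθ0 (n + 1) r (by omega) (by omega) (h.le.trans (hsep n h1 h2)),
          Real.cos_zero, one_pow]
    have hsum : ∑ n ∈ Finset.Icc 1 (M + 1), W n r ^ 2
        = (∑ n ∈ Finset.Icc 1 M, b n * a (n + 1)) + b (M + 1) := by
      rw [Finset.sum_Icc_succ_top (by omega)]
      congr 1
      · refine Finset.sum_congr rfl fun n hn => ?_
        obtain ⟨hn1, hn2⟩ := Finset.mem_Icc.1 hn
        rw [hWrep n hn1 hn2 r hr, ha, hb]
        simp only
        ring
      · rw [hWlrep r hr, hb]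
    rw [hsum, hΦrep r hr, ← add_assoc]
    have : Real.cos (Real.pi / 2 * β ((r - (1 - γ) * ω 1) / (2 * γ * ω 1))) ^ 2 = a 1 := rfl
    rw [this, tele_sum a b hab M hd]
    exact hab (M + 1)
  -- now the L² computation
  intro f g hg0 hgW
  have hint : ∀ h : Lp ℂ 2 (volume : Measure (EuclideanSpace ℝ (Fin 2))),
      Integrable (fun x => ‖h x‖ ^ 2) volume := fun h =>
    (memLp_two_iff_integrable_sq_norm (Lp.aestronglyMeasurable h)).1 (Lp.memLp h)
  simp only [LinearIsometryEquiv.norm_map]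
  have hfF : ‖f‖ ^ 2 = ∫ x, ‖(F f : EuclideanSpace ℝ (Fin 2) → ℂ) x‖ ^ 2 := by
    rw [← F.norm_map f]; exact L2_norm_sq (F f)
  rw [hfF, L2_norm_sq (g 0),
    Finset.sum_congr rfl (fun n _ => L2_norm_sq (g n)),
    ← integral_finset_sum _ (fun n _ => hint (g n)),
    ← integral_add (hint (g 0)) (integrable_finset_sum _ fun n _ => hint (g n))]
  refine integral_congr_ae ?_
  have haeW : ∀ᵐ x : EuclideanSpace ℝ (Fin 2), ∀ n ∈ (Finset.Icc 1 (M + 1) : Set ℕ),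
      (g n : EuclideanSpace ℝ (Fin 2) → ℂ) x
        = (W n ‖x‖ : ℂ) * (F f : EuclideanSpace ℝ (Fin 2) → ℂ) x := by
    refine (ae_ball_iff (Finset.Icc 1 (M + 1)).countable_toSet).2 fun n hn => ?_
    have hn' : n ∈ Finset.Icc 1 (M + 1) := hn
    obtain ⟨hn1, hn2⟩ := Finset.mem_Icc.1 hn'
    filter_upwards [hgW n hn1 hn2] with x hx
    exact hx
  have hmul : ∀ (c : ℝ) (z : ℂ), ‖(c : ℂ) * z‖ ^ 2 = c ^ 2 * ‖z‖ ^ 2 := by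
    intro c z
    rw [norm_mul, mul_pow, Complex.norm_real, Real.norm_eq_abs, sq_abs]
  filter_upwards [hg0, haeW] with x h0 hWx
  have : ‖(g 0 : EuclideanSpace ℝ (Fin 2) → ℂ) x‖ ^ 2
      + ∑ n ∈ Finset.Icc 1 (M + 1), ‖(g n : EuclideanSpace ℝ (Fin 2) → ℂ) x‖ ^ 2
      = (Φ ‖x‖ ^ 2 + ∑ n ∈ Finset.Icc 1 (M + 1), W n ‖x‖ ^ 2)
        * ‖(F f : EuclideanSpace ℝ (Fin 2) → ℂ) x‖ ^ 2 := by
    rw [h0, hmul, add_mul, Finset.sum_mul]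
    congr 1
    exact Finset.sum_congr rfl fun n hn => by rw [hWx n hn, hmul]
  rw [this, key ‖x‖ (norm_nonneg x), one_mul]
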